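/- Let n_1,...,n_r be a suitable vector configuration in a lattice N with lattice Gale transform (P, {a_1,...,a_r}), and let I ⊆ {1,...,r} be such that the submonoid generated by {a_j : j ∉ I} equals the full submonoid S generated by all a_j. Then for every i ∈ I there exists e ∈ Hom(N,ℤ) with ⟨n_i,e⟩ = -1, ⟨n_j,e⟩ ≥ 0 for all j ≠ i, and ⟨n_k,e⟩ = 0 for all k ∈ I with k ≠ i. -/

import Mathlib

/-- For a suitable configuration with lattice Gale transform `(P, a)` and a
subset `I` such that the `a j`, `j ∉ I`, generate the full submonoid `S`, every `i ∈ I`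
admits `e ∈ Hom(N,ℤ)` with `⟨n i, e⟩ = -1`, `⟨n j, e⟩ ≥ 0` for `j ≠ i`, and
`⟨n k, e⟩ = 0` for `k ∈ I`, `k ≠ i`. -/
theorem stmt12 {N P : Type*} [AddCommGroup N] [Module ℤ N] [Module.Free ℤ N]
    [Module.Finite ℤ N] [AddCommGroup P] {r : ℕ} (n : Fin r → N)
    (hspan : ∀ e : N →ₗ[ℤ] ℤ, (∀ i, e (n i) = 0) → e = 0)
    (β : (Fin r → ℤ) →+ P) (hsurj : Function.Surjective β)
    (hker : ∀ v : Fin r → ℤ, β v = 0 ↔ ∃ e : N →ₗ[ℤ] ℤ, ∀ i, v i = e (n i))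
    (hsuit : ∀ i, ∃ e : N →ₗ[ℤ] ℤ, e (n i) = -1 ∧ ∀ j, j ≠ i → 0 ≤ e (n j))
    (I : Set (Fin r))
    (hI : AddSubmonoid.closure {p | ∃ j, j ∉ I ∧ β (Pi.single j 1) = p}
        = AddSubmonoid.closure (Set.range fun j => β (Pi.single j 1))) :
    ∀ i ∈ I, ∃ e : N →ₗ[ℤ] ℤ, e (n i) = -1 ∧ (∀ j, j ≠ i → 0 ≤ e (n j)) ∧
      ∀ k ∈ I, k ≠ i → e (n k) = 0 := by
  intro i hi
  -- a_i belongs to the closure of the a_j, j ∉ I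
  have hmem : β (Pi.single i 1) ∈
      AddSubmonoid.closure {p | ∃ j, j ∉ I ∧ β (Pi.single j 1) = p} := by
    rw [hI]
    exact AddSubmonoid.subset_closure ⟨i, rfl⟩
  -- every element of that closure is β v with v ≥ 0 supported off I
  have key : ∀ p ∈ AddSubmonoid.closure {p | ∃ j, j ∉ I ∧ β (Pi.single j 1) = p},
      ∃ v : Fin r → ℤ, (∀ k, 0 ≤ v k) ∧ (∀ k ∈ I, v k = 0) ∧ β v = p := by
    intro p hp
    induction hp using AddSubmonoid.closure_induction with
    | mem x hx =>
      obtain ⟨j, hj, hjx⟩ := hx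
      refine ⟨Pi.single j 1, ?_, ?_, hjx⟩
      · intro k
        rcases eq_or_ne k j with rfl | h
        · simp
        · simp [Pi.single_eq_of_ne h]
      · intro k hk
        have : k ≠ j := fun h => hj (h ▸ hk)
        simp [Pi.single_eq_of_ne this]
    | zero => exact ⟨0, fun k => le_refl 0, fun k _ => rfl, map_zero β⟩
    | add x y hx hy ihx ihy =>
      obtain ⟨v, hv0, hvI, hvβ⟩ := ihx
      obtain ⟨w, hw0, hwI, hwβ⟩ := ihy
      exact ⟨v + w, fun k => add_nonneg (hv0 k) (hw0 k),
        fun k hk => by simp [hvI k hk, hwI k hk],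
        by rw [map_add, hvβ, hwβ]⟩
  obtain ⟨v, hv0, hvI, hvβ⟩ := key _ hmem
  have hker' : β (v - Pi.single i 1) = 0 := by
    rw [map_sub, hvβ, sub_self]
  obtain ⟨e, he⟩ := (hker _).mp hker'
  refine ⟨e, ?_, ?_, ?_⟩
  · have := he i
    simp [hvI i hi] at this
    linarith
  · intro j hj
    have := he j
    simp [Pi.single_eq_of_ne hj] at this
    linarith [hv0 j]
  · intro k hk hki
    have := he k
    simp [Pi.single_eq_of_ne hki, hvI k hk] at this
    linarith
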